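/- Let $T$ be the free graded $\mathbb{Z}$-module on $\alpha, \gamma, \eta$ (degree 0) and $\beta$ (degree 1) with differential $d\beta = \gamma$. Define the universal coproduct $\psi: T \to T \otimes T$ by $\psi(\eta) = \eta\otimes\eta + \gamma\otimes\eta + \eta\otimes\gamma + \gamma\otimes\gamma$, $\psi(\gamma) = \gamma\otimes\gamma + \gamma\otimes\eta + \eta\otimes\gamma$, $\psi(\beta) = \beta\otimes\gamma + \beta\otimes\eta + \eta\otimes\beta + \alpha\otimes\alpha + \alpha\otimes\eta + \eta\otimes\alpha + \eta\otimes\eta$, $\psi(\alpha) = \alpha\otimes\alpha + \alpha\otimes\eta + \eta\otimes\alpha + \eta\otimes\eta$. Then $\psi$ is a chain map, i.e., $(d \otimes 1 + 1 \otimes d)\circ\psi = \psi \circ d$, where the tensor product differential uses the Koszul sign convention. -/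

import Mathlib

/-- Generators of the complex `T`: `a = α`, `b = β`, `c = γ`, `e = η`. -/
inductive Gen5 : Type | a | b | c | e
deriving DecidableEq

open Finsupp TensorProduct

/-- `T` is the free `ℤ`-module on `α, γ, η` (degree 0) and `β` (degree 1). -/
abbrev T5 : Type := Gen5 →₀ ℤ

/-- basis element -/
noncomputable def g5 (x : Gen5) : T5 := Finsupp.single x 1

/-- The differential: `dβ = γ`, `dα = dγ = dη = 0`. -/
noncomputable def d5 : T5 →ₗ[ℤ] T5 :=
  Finsupp.lsum ℤ fun x => LinearMap.toSpanSingleton ℤ T5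
    (match x with | .b => g5 .c | _ => 0)

/-- The Koszul sign operator `ε(x) = (-1)^{|x|} x` (only `β` has degree 1). -/
noncomputable def eps5 : T5 →ₗ[ℤ] T5 :=
  Finsupp.lsum ℤ fun x => LinearMap.toSpanSingleton ℤ T5
    (match x with | .b => -g5 .b | y => g5 y)

/-- The universal coproduct `ψ` of Statement 5. -/
noncomputable def psi5 : T5 →ₗ[ℤ] T5 ⊗[ℤ] T5 :=
  Finsupp.lsum ℤ fun x => LinearMap.toSpanSingleton ℤ (T5 ⊗[ℤ] T5)
    (match x with
     | .e => g5 .e ⊗ₜ g5 .e + g5 .c ⊗ₜ g5 .e + g5 .e ⊗ₜ g5 .c + g5 .c ⊗ₜ g5 .c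
     | .c => g5 .c ⊗ₜ g5 .c + g5 .c ⊗ₜ g5 .e + g5 .e ⊗ₜ g5 .c
     | .b => g5 .b ⊗ₜ g5 .c + g5 .b ⊗ₜ g5 .e + g5 .e ⊗ₜ g5 .b
             + g5 .a ⊗ₜ g5 .a + g5 .a ⊗ₜ g5 .e + g5 .e ⊗ₜ g5 .a + g5 .e ⊗ₜ g5 .e
     | .a => g5 .a ⊗ₜ g5 .a + g5 .a ⊗ₜ g5 .e + g5 .e ⊗ₜ g5 .a + g5 .e ⊗ₜ g5 .e)

/-- The differential on `T ⊗ T` with the Koszul sign convention: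
`d(x ⊗ y) = dx ⊗ y + (-1)^{|x|} x ⊗ dy`. -/
noncomputable def dT5 : T5 ⊗[ℤ] T5 →ₗ[ℤ] T5 ⊗[ℤ] T5 :=
  TensorProduct.map d5 LinearMap.id + TensorProduct.map eps5 d5
theorem dT5_apply (v : T5 ⊗[ℤ] T5) :
    dT5 v = TensorProduct.map d5 LinearMap.id v + TensorProduct.map eps5 d5 v := rfl

/-- the universal coproduct `ψ` is a chain map. -/
theorem psi5_chainMap : dT5 ∘ₗ psi5 = psi5 ∘ₗ d5 := by
  ext x
  cases x <;>
    simp [dT5_apply, psi5, d5, eps5, g5, TensorProduct.tmul_add, TensorProduct.add_tmul,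
      TensorProduct.tmul_neg, TensorProduct.neg_tmul]
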